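/- Let Γ be a closed connected subset of a complete metric space with H¹(Γ) < ∞. Then Γ is compact. -/

import Mathlib

open MeasureTheory Metric Set ENNReal

lemma length_ge_of_connected {M : Type*} [MetricSpace M]
    [MeasurableSpace M] [BorelSpace M] (Γ : Set M) (hconn : IsConnected Γ)
    {x y : M} (hx : x ∈ Γ) (hy : y ∈ Γ) {r : ℝ} (hr0 : 0 ≤ r) (hr : r ≤ dist y x) :
    ENNReal.ofReal r ≤ μH[1] (Γ ∩ closedBall x r) := by
  set f : M → ℝ := fun z => dist z x with hf
  have hlip : LipschitzWith 1 f := LipschitzWith.dist_left x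
  have himg : IsPreconnected (f '' Γ) :=
    hconn.isPreconnected.image f (hlip.continuous.continuousOn)
  have hord := himg.ordConnected
  have hIcc : Icc (0:ℝ) (dist y x) ⊆ f '' Γ := by
    have h0 : (0:ℝ) ∈ f '' Γ := ⟨x, hx, by simp [hf]⟩
    have h1 : dist y x ∈ f '' Γ := ⟨y, hy, rfl⟩
    exact hord.out h0 h1
  have hIcc' : Icc (0:ℝ) r ⊆ f '' (Γ ∩ closedBall x r) := by
    intro t ht
    obtain ⟨z, hz, hzt⟩ := hIcc ⟨ht.1, ht.2.trans hr⟩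
    exact ⟨z, ⟨hz, by rw [mem_closedBall]; have := ht.2; rw [← hzt] at this; exact this⟩, hzt⟩
  calc ENNReal.ofReal r = μH[1] (Icc (0:ℝ) r) := by
        rw [MeasureTheory.hausdorffMeasure_real, Real.volume_Icc]; simp
    _ ≤ μH[1] (f '' (Γ ∩ closedBall x r)) := measure_mono hIcc'
    _ ≤ (1:ℝ≥0∞) ^ (1:ℝ) * μH[1] (Γ ∩ closedBall x r) :=
        hlip.hausdorffMeasure_image_le zero_le_one _
    _ = μH[1] (Γ ∩ closedBall x r) := by simp

/-- A closed connected subset of finite `H¹` measure of a complete metric space is compact. -/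
theorem closed_connected_finite_length_compact {M : Type*} [MetricSpace M] [CompleteSpace M]
    [MeasurableSpace M] [BorelSpace M] (Γ : Set M) (hclosed : IsClosed Γ)
    (hconn : IsConnected Γ) (hfin : μH[1] Γ < ⊤) :
    IsCompact Γ := by
  refine TotallyBounded.isCompact_of_isClosed ?_ hclosed
  by_contra htb
  rw [Metric.totallyBounded_iff] at htb
  push_neg at htb
  obtain ⟨ε, hε, hsep⟩ := htb
  -- for every finite set, some point of Γ is ε-far from all of them
  have key : ∀ s : Finset M, ∃ x ∈ Γ, ∀ y ∈ s, ε ≤ dist x y := by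
    intro s
    obtain ⟨x, hxΓ, hx⟩ := not_subset.1 (hsep s s.finite_toSet)
    refine ⟨x, hxΓ, fun y hy => ?_⟩
    by_contra h
    exact hx (mem_iUnion₂.2 ⟨y, hy, by simpa [mem_ball, dist_comm] using lt_of_not_ge h⟩)
  classical
  choose F hF1 hF2 using key
  -- build an ε-separated sequence
  let s : ℕ → Finset M := fun n => Nat.rec ∅ (fun _ t => insert (F t) t) n
  let u : ℕ → M := fun n => F (s n)
  have hsmono : ∀ m n, m ≤ n → s m ⊆ s n := by
    intro m n h
    induction n with
    | zero => simp_all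
    | succ k ih =>
      rcases h.lt_or_eq with h' | h'
      · exact (ih (Nat.lt_succ_iff.1 h')).trans
          (show s k ⊆ insert (F (s k)) (s k) from Finset.subset_insert _ _)
      · rw [h']
  have humem : ∀ m n, m < n → u m ∈ s n := by
    intro m n h
    have : u m ∈ s (m+1) := Finset.mem_insert_self _ _
    exact hsmono (m+1) n h this
  have husep : ∀ m n, m < n → ε ≤ dist (u n) (u m) := fun m n h =>
    hF2 (s n) (u m) (humem m n h)
  have huΓ : ∀ n, u n ∈ Γ := fun n => hF1 (s n)
  -- disjoint balls
  set A : ℕ → Set M := fun n => Γ ∩ closedBall (u n) (ε/3) with hA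
  have hdisj : Pairwise (Function.onFun Disjoint A) := by
    intro m n hmn
    have hd : ε ≤ dist (u n) (u m) := by
      rcases hmn.lt_or_gt with h | h
      · exact husep m n h
      · rw [dist_comm]; exact husep n m h
    refine Set.disjoint_left.2 fun z hzm hzn => ?_
    have h1 : dist z (u m) ≤ ε/3 := hzm.2
    have h2 : dist z (u n) ≤ ε/3 := hzn.2
    have := dist_triangle (u n) z (u m)
    rw [dist_comm (u n) z] at this
    linarith
  have hmeas : ∀ n, MeasurableSet (A n) := fun n =>
    (hclosed.measurableSet).inter measurableSet_closedBall
  have hle : ∀ n, ENNReal.ofReal (ε/3) ≤ μH[1] (A n) := by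
    intro n
    rw [hA]
    refine length_ge_of_connected Γ hconn (huΓ n) (huΓ (n+1)) (by linarith) ?_
    calc ε/3 ≤ ε := by linarith
      _ ≤ dist (u (n+1)) (u n) := husep n (n+1) (Nat.lt_succ_self n)
  have hsum : (⊤ : ℝ≥0∞) ≤ μH[1] Γ := by
    calc (⊤ : ℝ≥0∞) = ∑' _ : ℕ, ENNReal.ofReal (ε/3) :=
          (ENNReal.tsum_const_eq_top_of_ne_zero (by positivity)).symm
      _ ≤ ∑' n, μH[1] (A n) := ENNReal.tsum_le_tsum hle
      _ = μH[1] (⋃ n, A n) := (measure_iUnion hdisj hmeas).symm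
      _ ≤ μH[1] Γ := measure_mono (iUnion_subset fun n => inter_subset_left)
  exact absurd (hsum.trans_lt hfin) (lt_irrefl _)
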